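/- Define for δ ≥ 0 and γ ≥ 0 the function F(δ) = 1 − e^{−λ_d δ}(1 − e^{−λ_d[γ−δ]^+}(1 − (λ_d/(λ_e+λ_d)) e^{−λ_e max{γ,δ}})), where λ_e, λ_d > 0. Then F is a valid cumulative distribution function on [0,∞): F is monotone nondecreasing, right-continuous, F(δ) ∈ [0,1] for all δ ≥ 0, and F(δ) → 1 as δ → ∞. -/
import Mathlib

open Real Filter

noncomputable def aoiCDF (lamE lamD γ δ : ℝ) : ℝ :=
  1 - exp (-lamD * δ) *
    (1 - exp (-lamD * max (γ - δ) 0) *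
      (1 - lamD / (lamE + lamD) * exp (-lamE * max γ δ)))

lemma aoi_left (lamE lamD γ δ : ℝ) (h : δ ≤ γ) :
    aoiCDF lamE lamD γ δ = 1 - exp (-lamD * δ)
      + exp (-lamD * γ) * (1 - lamD / (lamE + lamD) * exp (-lamE * γ)) := by
  have h1 : max (γ - δ) 0 = γ - δ := max_eq_left (by linarith)
  have h2 : max γ δ = γ := max_eq_left h
  have h3 : exp (-lamD * δ) * exp (-lamD * (γ - δ)) = exp (-lamD * γ) := by
    rw [← exp_add]; ring_nf
  unfold aoiCDF
  rw [h1, h2]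
  linear_combination (1 - lamD / (lamE + lamD) * exp (-lamE * γ)) * h3

lemma aoi_right (lamE lamD γ δ : ℝ) (h : γ ≤ δ) :
    aoiCDF lamE lamD γ δ = 1 - lamD / (lamE + lamD) * exp (-(lamE + lamD) * δ) := by
  have h1 : max (γ - δ) 0 = 0 := max_eq_right (by linarith)
  have h2 : max γ δ = δ := max_eq_right h
  have h3 : exp (-lamD * δ) * exp (-lamE * δ) = exp (-(lamE + lamD) * δ) := by
    rw [← exp_add]; ring_nf
  unfold aoiCDF
  rw [h1, h2, mul_zero, exp_zero]
  linear_combination (-(lamD / (lamE + lamD))) * h3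

theorem stmt_7 (lamE lamD : ℝ) (hE : 0 < lamE) (hD : 0 < lamD)
    (γ : ℝ) (hγ : 0 ≤ γ) :
    MonotoneOn (aoiCDF lamE lamD γ) (Set.Ici 0) ∧
    (∀ δ ∈ Set.Ici (0 : ℝ),
      ContinuousWithinAt (aoiCDF lamE lamD γ) (Set.Ici δ) δ) ∧
    (∀ δ ∈ Set.Ici (0 : ℝ), aoiCDF lamE lamD γ δ ∈ Set.Icc (0 : ℝ) 1) ∧
    Tendsto (aoiCDF lamE lamD γ) atTop (nhds 1) := by
  have hc0 : 0 < lamD / (lamE + lamD) := by positivity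
  have hc1 : lamD / (lamE + lamD) < 1 := by
    rw [div_lt_one (by linarith)]; linarith
  -- monotone on the left piece
  have monoL : ∀ a b, a ≤ b → b ≤ γ →
      aoiCDF lamE lamD γ a ≤ aoiCDF lamE lamD γ b := by
    intro a b hab hbγ
    rw [aoi_left lamE lamD γ a (le_trans hab hbγ), aoi_left lamE lamD γ b hbγ]
    have : exp (-lamD * b) ≤ exp (-lamD * a) := exp_le_exp.2 (by nlinarith)
    linarith
  have monoR : ∀ a b, γ ≤ a → a ≤ b →
      aoiCDF lamE lamD γ a ≤ aoiCDF lamE lamD γ b := by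
    intro a b hγa hab
    rw [aoi_right lamE lamD γ a hγa, aoi_right lamE lamD γ b (le_trans hγa hab)]
    have : exp (-(lamE + lamD) * b) ≤ exp (-(lamE + lamD) * a) :=
      exp_le_exp.2 (by nlinarith)
    nlinarith
  have mono : MonotoneOn (aoiCDF lamE lamD γ) (Set.Ici 0) := by
    intro a ha b hb hab
    rcases le_total b γ with hbγ | hγb
    · exact monoL a b hab hbγ
    · rcases le_total a γ with haγ | hγa
      · exact le_trans (monoL a γ haγ le_rfl) (monoR γ b le_rfl hγb)
      · exact monoR a b hγa hab
  have hcont : Continuous (aoiCDF lamE lamD γ) := by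
    unfold aoiCDF; fun_prop
  refine ⟨mono, fun δ _ => hcont.continuousWithinAt, ?_, ?_⟩
  · intro δ hδ
    simp only [Set.mem_Ici] at hδ
    constructor
    · rcases le_total δ γ with h | h
      · rw [aoi_left lamE lamD γ δ h]
        have h1 : exp (-lamD * δ) ≤ 1 := exp_le_one_iff.2 (by nlinarith)
        have h2 : lamD / (lamE + lamD) * exp (-lamE * γ) ≤ 1 := by
          have : exp (-lamE * γ) ≤ 1 := exp_le_one_iff.2 (by nlinarith)
          nlinarith
        have h3 : 0 < exp (-lamD * γ) := exp_pos _
        nlinarith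
      · rw [aoi_right lamE lamD γ δ h]
        have : exp (-(lamE + lamD) * δ) ≤ 1 :=
          exp_le_one_iff.2 (by nlinarith)
        nlinarith
    · rcases le_total δ γ with h | h
      · rw [aoi_left lamE lamD γ δ h]
        have h1 : exp (-lamD * γ) ≤ exp (-lamD * δ) := exp_le_exp.2 (by nlinarith)
        have h2 : 0 < exp (-lamE * γ) := exp_pos _
        have h3 : 0 < exp (-lamD * γ) := exp_pos _
        nlinarith [mul_pos h3 (mul_pos hc0 h2)]
      · rw [aoi_right lamE lamD γ δ h]
        have := exp_pos (-(lamE + lamD) * δ)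
        nlinarith
  · have hev : ∀ᶠ δ in atTop, (1 - lamD / (lamE + lamD) * exp (-(lamE + lamD) * δ))
        = aoiCDF lamE lamD γ δ := by
      filter_upwards [eventually_ge_atTop γ] with δ h
      exact (aoi_right lamE lamD γ δ h).symm
    refine Tendsto.congr' hev ?_
    have h1 : Tendsto (fun δ : ℝ => -(lamE + lamD) * δ) atTop atBot :=
      tendsto_id.const_mul_atTop_of_neg (by linarith)
    have h2 : Tendsto (fun δ : ℝ => exp (-(lamE + lamD) * δ)) atTop (nhds 0) :=
      tendsto_exp_atBot.comp h1
    have h3 := (h2.const_mul (lamD / (lamE + lamD))).const_sub 1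
    simpa using h3
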